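/- Let z ∈ H and α ≥ β > 0. With z(α) = P_C(z − αF(z)) and residual e(z, α) = z − z(α), one has (1/α)‖e(z, α)‖ ≤ (1/β)‖e(z, β)‖. -/
import Mathlib


open scoped RealInnerProductSpace

lemma vi_of_proj {H : Type*} [NormedAddCommGroup H] [InnerProductSpace ℝ H]
    {C : Set H} (hC : Convex ℝ C) {x p : H} (hp : p ∈ C)
    (hproj : ∀ u ∈ C, ‖x - p‖ ≤ ‖x - u‖) :
    ∀ w ∈ C, ⟪x - p, w - p⟫ ≤ 0 := by
  haveI : Nonempty C := ⟨⟨p, hp⟩⟩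
  have heq : ‖x - p‖ = ⨅ w : C, ‖x - w‖ := by
    apply le_antisymm
    · exact le_ciInf fun w => hproj w w.2
    · exact ciInf_le ⟨0, fun r ⟨w, hw⟩ => hw ▸ norm_nonneg _⟩ (⟨p, hp⟩ : C)
  exact (norm_eq_iInf_iff_real_inner_le_zero hC hp).mp heq

/-- Let `z ∈ H` and `α ≥ β > 0`. With `z(λ) = P_C (z - λ F z)` and residual
`e(z, λ) = z - z(λ)`, one has `(1/α)‖e(z, α)‖ ≤ (1/β)‖e(z, β)‖`. -/
theorem stmt_9 {H : Type*} [NormedAddCommGroup H] [InnerProductSpace ℝ H] [CompleteSpace H]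
    (C : Set H) (hCne : C.Nonempty) (hCc : IsClosed C) (hC : Convex ℝ C)
    (F : H → H) (z : H) (α β : ℝ) (hβ : 0 < β) (hαβ : β ≤ α)
    (zα zβ : H)
    (hzα : zα ∈ C) (hzαproj : ∀ u ∈ C, ‖z - α • F z - zα‖ ≤ ‖z - α • F z - u‖)
    (hzβ : zβ ∈ C) (hzβproj : ∀ u ∈ C, ‖z - β • F z - zβ‖ ≤ ‖z - β • F z - u‖) :
    (1 / α) * ‖z - zα‖ ≤ (1 / β) * ‖z - zβ‖ := by
  have hα : (0:ℝ) < α := lt_of_lt_of_le hβ hαβ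
  have h1 := vi_of_proj hC hzα hzαproj zβ hzβ
  have h2 := vi_of_proj hC hzβ hzβproj zα hzα
  set eα := z - zα with heα
  set eβ := z - zβ with heβ
  have e1 : z - α • F z - zα = eα - α • F z := by rw [heα]; abel
  have e2 : z - β • F z - zβ = eβ - β • F z := by rw [heβ]; abel
  have e3 : zβ - zα = eα - eβ := by rw [heα, heβ]; abel
  have e4 : zα - zβ = eβ - eα := by rw [heα, heβ]; abel
  rw [e1, e3] at h1
  rw [e2, e4] at h2
  simp only [inner_sub_left, inner_sub_right, real_inner_smul_left] at h1 h2
  have ha : ⟪eα, eα⟫ = ‖eα‖^2 := real_inner_self_eq_norm_sq eα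
  have hb : ⟪eβ, eβ⟫ = ‖eβ‖^2 := real_inner_self_eq_norm_sq eβ
  have hs : ⟪eβ, eα⟫ = ⟪eα, eβ⟫ := real_inner_comm _ _
  have hfs : ⟪F z, eβ⟫ = ⟪F z, eβ⟫ := rfl
  rw [ha] at h1
  rw [hb, hs] at h2
  -- key : β‖eα‖² + α‖eβ‖² ≤ (α+β)⟪eα,eβ⟫
  have key : β * ‖eα‖^2 + α * ‖eβ‖^2 ≤ (α + β) * ⟪eα, eβ⟫ := by
    nlinarith [mul_le_mul_of_nonneg_left h1 hβ.le, mul_le_mul_of_nonneg_left h2 hα.le]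
  have hab : ⟪eα, eβ⟫ ≤ ‖eα‖ * ‖eβ‖ := real_inner_le_norm eα eβ
  have ha0 : 0 ≤ ‖eα‖ := norm_nonneg _
  have hb0 : 0 ≤ ‖eβ‖ := norm_nonneg _
  rw [div_mul_eq_mul_div, div_mul_eq_mul_div, one_mul, one_mul,
    div_le_div_iff₀ hα hβ]
  have key2 : β * ‖eα‖^2 + α * ‖eβ‖^2 ≤ (α + β) * (‖eα‖ * ‖eβ‖) :=
    le_trans key (mul_le_mul_of_nonneg_left hab (by linarith))
  by_contra h
  push_neg at h
  have hba : ‖eβ‖ < ‖eα‖ := by nlinarith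
  nlinarith [mul_pos (sub_pos.2 hba) (show 0 < β * ‖eα‖ - α * ‖eβ‖ by nlinarith)]
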